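/- Let D be a link diagram with n crossings. Then the maximal exponent of the Kauffman bracket of D satisfies M_<D> <= n + 2|s_+D| - 2, with equality if D is plus-adequate; and the minimal exponent satisfies m_<D> >= -n - 2|s_-D| + 2, with equality if D is minus-adequate. -/

import Mathlib

open LaurentPolynomial

namespace KnotPaper

/-- A combinatorial model of a link diagram: a set `V` of crossings, each with four
edge-ends (labelled `0,1,2,3` counterclockwise), together with a fixed-point-free
involution `arcs` on edge-ends describing the arcs/strands connecting the crossings. -/
structure Diagram (V : Type) where
  arcs : V × Fin 4 → V × Fin 4
  arcs_invol : Function.Involutive arcs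
  arcs_ne : ∀ x, arcs x ≠ x

/-- A state assigns `true` (positive split) or `false` (negative split) to each crossing. -/
abbrev DState (V : Type) := V → Bool

/-- The pairing of the four edge-ends of a crossing induced by splitting it:
positively (`0-1`, `2-3`) or negatively (`0-3`, `1-2`). -/
def resolveEnd {V : Type} (s : DState V) (x : V × Fin 4) : V × Fin 4 :=
  (x.1,
    if s x.1 then
      (if x.2 = 0 then 1 else if x.2 = 1 then 0 else if x.2 = 2 then 3 else 2)
    else
      (if x.2 = 0 then 3 else if x.2 = 3 then 0 else if x.2 = 1 then 2 else 1))

/-- Two edge-ends are related if joined by an arc of the diagram or by the splitting. -/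
def circuitRel {V : Type} (D : Diagram V) (s : DState V) (x y : V × Fin 4) : Prop :=
  D.arcs x = y ∨ resolveEnd s x = y

/-- `circuits D s` is the number of circuits `|sD|` of the state `s`: the number of
connected components of the splitted diagram. -/
noncomputable def circuits {V : Type} (D : Diagram V) (s : DState V) : ℕ :=
  Nat.card (Quotient (Relation.EqvGen.setoid (circuitRel D s)))

/-- The all-positive state `s₊`. -/
def sPlus (V : Type) : DState V := fun _ => true

/-- The all-negative state `s₋`. -/
def sMinus (V : Type) : DState V := fun _ => false

/-- `∑ i, s(i)` where positive splits count `+1` and negative splits `-1`. -/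
def signSum {V : Type} [Fintype V] (s : DState V) : ℤ :=
  ∑ c : V, (if s c then (1 : ℤ) else -1)

/-- The Kauffman bracket `⟨D⟩ = ∑ₛ A^{∑ᵢ s(i)} (-A⁻² - A²)^{|sD| - 1}`. -/
noncomputable def kauffman {V : Type} [Fintype V] [DecidableEq V] (D : Diagram V) :
    LaurentPolynomial ℤ :=
  ∑ s : DState V, T (signSum s) * (-T (-2) - T 2) ^ (circuits D s - 1)

/-- `s` and `s'` differ at exactly one crossing. -/
def OneOff {V : Type} (s s' : DState V) : Prop :=
  ∃ i, s i ≠ s' i ∧ ∀ j, j ≠ i → s j = s' j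

/-- `D` is plus-adequate: `|s₊D| > |sD|` for every state `s` with exactly one negative split. -/
def PlusAdequate {V : Type} (D : Diagram V) : Prop :=
  ∀ s : DState V, OneOff (sPlus V) s → circuits D s < circuits D (sPlus V)

/-- `D` is minus-adequate: `|s₋D| > |sD|` for every state `s` with exactly one positive split. -/
def MinusAdequate {V : Type} (D : Diagram V) : Prop :=
  ∀ s : DState V, OneOff (sMinus V) s → circuits D s < circuits D (sMinus V)

/-- `D` is adequate if it is both plus- and minus-adequate. -/
def Adequate {V : Type} (D : Diagram V) : Prop := PlusAdequate D ∧ MinusAdequate D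

/-- The maximal exponent `M_p` of a (nonzero) Laurent polynomial (junk value `0` for `p = 0`). -/
noncomputable def maxDeg (p : LaurentPolynomial ℤ) : ℤ := p.coeff.support.max.unbotD 0

/-- The minimal exponent `m_p` of a (nonzero) Laurent polynomial (junk value `0` for `p = 0`). -/
noncomputable def minDeg (p : LaurentPolynomial ℤ) : ℤ := p.coeff.support.min.untopD 0

/-- The breadth `B(p) = M_p - m_p` of a Laurent polynomial. -/
noncomputable def breadth (p : LaurentPolynomial ℤ) : ℤ := maxDeg p - minDeg p

end KnotPaper

namespace KnotPaper

set_option linter.dupNamespace false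

open Relation
variable {α : Type*}

/-- The equivalence `r` with classes of `a` and `b` merged. -/
def extRel (r : α → α → Prop) (a b : α) (x y : α) : Prop :=
  r x y ∨ (r x a ∧ r b y) ∨ (r x b ∧ r a y)

lemma extRel_equivalence {r : α → α → Prop} (hr : Equivalence r) (a b : α) :
    Equivalence (extRel r a b) := by
  constructor
  · intro x; exact Or.inl (hr.refl x)
  · rintro x y (h | ⟨h1, h2⟩ | ⟨h1, h2⟩)
    · exact Or.inl (hr.symm h)
    · exact Or.inr (Or.inr ⟨hr.symm h2, hr.symm h1⟩)
    · exact Or.inr (Or.inl ⟨hr.symm h2, hr.symm h1⟩)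
  · rintro x y z (h | ⟨h1, h2⟩ | ⟨h1, h2⟩) (g | ⟨g1, g2⟩ | ⟨g1, g2⟩)
    · exact Or.inl (hr.trans h g)
    · exact Or.inr (Or.inl ⟨hr.trans h g1, g2⟩)
    · exact Or.inr (Or.inr ⟨hr.trans h g1, g2⟩)
    · exact Or.inr (Or.inl ⟨h1, hr.trans h2 g⟩)
    · exact Or.inl (hr.trans (hr.trans h1 (hr.symm (hr.trans h2 g1))) g2)
    · exact Or.inl (hr.trans h1 g2)
    · exact Or.inr (Or.inr ⟨h1, hr.trans h2 g⟩)
    · exact Or.inl (hr.trans h1 g2)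
    · exact Or.inl (hr.trans h1 (hr.trans (hr.symm (hr.trans h2 g1)) g2))

lemma card_quot_le_of_imp [Finite α] {R S : α → α → Prop}
    (h : ∀ x y, R x y → EqvGen S x y) :
    Nat.card (Quotient (EqvGen.setoid S)) ≤ Nat.card (Quotient (EqvGen.setoid R)) := by
  have hw : ∀ x y, (EqvGen.setoid R).r x y → (EqvGen.setoid S).r x y := by
    intro x y hxy
    have := Relation.EqvGen.mono h _ _ hxy
    exact ((Relation.EqvGen.is_equivalence S).eqvGen_eq ▸ this : EqvGen S x y)
  refine Nat.card_le_card_of_surjective (Quotient.map' id hw) ?_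
  intro q
  refine Quotient.inductionOn' q (fun x => ⟨Quotient.mk'' x, rfl⟩)

lemma card_quot_le_addPair [Finite α] (R : α → α → Prop) (a b : α) :
    Nat.card (Quotient (EqvGen.setoid R)) ≤
      Nat.card (Quotient (EqvGen.setoid (fun x y => R x y ∨ (x = a ∧ y = b)))) + 1 := by
  classical
  set S : α → α → Prop := fun x y => R x y ∨ (x = a ∧ y = b) with hS
  have hr : Equivalence (EqvGen R) := Relation.EqvGen.is_equivalence R
  have hE : Equivalence (extRel (EqvGen R) a b) := extRel_equivalence hr a b
  have hES : ∀ x y, EqvGen S x y → extRel (EqvGen R) a b x y := by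
    intro x y hxy
    refine hE.eqvGen_iff.1 (Relation.EqvGen.mono ?_ _ _ hxy)
    rintro u v (huv | ⟨hu, hv⟩)
    · exact Or.inl (EqvGen.rel u v huv)
    · exact Or.inr (Or.inl ⟨hu ▸ hr.refl u, hv ▸ hr.refl b⟩)
  have hw : ∀ x y, (EqvGen.setoid R).r x y → (EqvGen.setoid S).r x y := by
    intro x y hxy
    exact Relation.EqvGen.mono (fun u v huv => Or.inl huv) _ _ hxy
  set f : Quotient (EqvGen.setoid R) → Quotient (EqvGen.setoid S) ⊕ Unit :=
    fun q => if q = Quotient.mk'' a then Sum.inr ⟨⟩ else Sum.inl (Quotient.map' id hw q)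
    with hf
  have hinj : Function.Injective f := by
    intro q1 q2
    refine Quotient.inductionOn₂' q1 q2 (fun x y hq => ?_)
    by_cases h1 : Quotient.mk'' x = (Quotient.mk'' a : Quotient (EqvGen.setoid R)) <;>
      by_cases h2 : Quotient.mk'' y = (Quotient.mk'' a : Quotient (EqvGen.setoid R)) <;>
      simp only [hf, h1, h2, if_false, if_true, eq_self_iff_true] at hq
    · exact h1.trans h2.symm
    · exact absurd hq (by simp)
    · exact absurd hq (by simp)
    · simp only [Sum.inl.injEq, Quotient.map'_mk'', id] at hq
      have hxy' : EqvGen S x y := Quotient.eq''.1 hq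
      rcases hES x y hxy' with h | ⟨ha, hb⟩ | ⟨hb, ha⟩
      · exact Quotient.sound' h
      · exact absurd (Quotient.sound' ha) h1
      · exact absurd (Quotient.sound' (hr.symm ha)) h2
  calc Nat.card (Quotient (EqvGen.setoid R)) ≤
      Nat.card (Quotient (EqvGen.setoid S) ⊕ Unit) := Nat.card_le_card_of_injective f hinj
    _ = Nat.card (Quotient (EqvGen.setoid S)) + 1 := by simp [Nat.card_sum]

variable {V : Type}

lemma resolveEnd_eq_of_ne {s : DState V} [DecidableEq V] {i : V} {b : Bool} {x : V × Fin 4}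
    (hx : x.1 ≠ i) : resolveEnd (Function.update s i b) x = resolveEnd s x := by
  simp [resolveEnd, Function.update_of_ne hx]

lemma circuits_update_le [DecidableEq V] [Finite V] (D : Diagram V) (s : DState V)
    (i : V) (b : Bool) (hb : b ≠ s i) :
    circuits D s ≤ circuits D (Function.update s i b) + 1 := by
  classical
  set s' := Function.update s i b with hs'
  have hs'i : s' i = !(s i) := by
    rw [hs', Function.update_self]
    revert hb; cases b <;> cases hsx : s i <;> simp
  have hs'ne : ∀ x : V × Fin 4, x.1 ≠ i → resolveEnd s' x = resolveEnd s x :=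
    fun x hx => resolveEnd_eq_of_ne hx
  set a : V × Fin 4 := (i, (0 : Fin 4)) with ha
  set bb : V × Fin 4 := (i, if s i then (3 : Fin 4) else 1) with hbb
  set S : V × Fin 4 → V × Fin 4 → Prop :=
    fun x y => circuitRel D s x y ∨ (x = a ∧ y = bb) with hS
  have key : circuits D s ≤ Nat.card (Quotient (EqvGen.setoid S)) + 1 :=
    card_quot_le_addPair (circuitRel D s) a bb
  have himp : ∀ x y, circuitRel D s' x y → EqvGen S x y := by
    rintro x y (harc | hres)
    · exact EqvGen.rel x y (Or.inl (Or.inl harc))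
    · by_cases hx : x.1 = i
      · obtain ⟨xi, j⟩ := x
        simp only at hx
        subst hx
        subst hres
        have hpair : EqvGen S a bb := EqvGen.rel _ _ (Or.inr ⟨rfl, rfl⟩)
        have hrs : ∀ u v : V × Fin 4, resolveEnd s u = v → EqvGen S u v :=
          fun u v h => EqvGen.rel u v (Or.inl (Or.inr h))
        cases hsi : s xi with
        | true =>
          have hfalse : s' xi = false := by rw [hs'i, hsi]; rfl
          have h01 : EqvGen S (xi, (0:Fin 4)) (xi, 3) := by
            simpa [ha, hbb, hsi] using hpair
          fin_cases j
          · show EqvGen S (xi, (0:Fin 4)) (resolveEnd s' (xi, (0:Fin 4)))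
            rw [show resolveEnd s' (xi, (0:Fin 4)) = (xi, 3) from by simp [resolveEnd, hfalse]]
            exact h01
          · show EqvGen S (xi, (1:Fin 4)) (resolveEnd s' (xi, (1:Fin 4)))
            rw [show resolveEnd s' (xi, (1:Fin 4)) = (xi, 2) from by simp [resolveEnd, hfalse]]
            refine EqvGen.trans _ _ _ (hrs _ _ ?_) (EqvGen.trans _ _ _ h01 (hrs _ _ ?_)) <;>
              simp [resolveEnd, hsi]
          · show EqvGen S (xi, (2:Fin 4)) (resolveEnd s' (xi, (2:Fin 4)))
            rw [show resolveEnd s' (xi, (2:Fin 4)) = (xi, 1) from by simp [resolveEnd, hfalse]]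
            refine EqvGen.symm _ _ ?_
            refine EqvGen.trans _ _ _ (hrs _ _ ?_) (EqvGen.trans _ _ _ h01 (hrs _ _ ?_)) <;>
              simp [resolveEnd, hsi]
          · show EqvGen S (xi, (3:Fin 4)) (resolveEnd s' (xi, (3:Fin 4)))
            rw [show resolveEnd s' (xi, (3:Fin 4)) = (xi, 0) from by simp [resolveEnd, hfalse]]
            exact EqvGen.symm _ _ h01
        | false =>
          have htrue : s' xi = true := by rw [hs'i, hsi]; rfl
          have h01 : EqvGen S (xi, (0:Fin 4)) (xi, 1) := by
            simpa [ha, hbb, hsi] using hpair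
          fin_cases j
          · show EqvGen S (xi, (0:Fin 4)) (resolveEnd s' (xi, (0:Fin 4)))
            rw [show resolveEnd s' (xi, (0:Fin 4)) = (xi, 1) from by simp [resolveEnd, htrue]]
            exact h01
          · show EqvGen S (xi, (1:Fin 4)) (resolveEnd s' (xi, (1:Fin 4)))
            rw [show resolveEnd s' (xi, (1:Fin 4)) = (xi, 0) from by simp [resolveEnd, htrue]]
            exact EqvGen.symm _ _ h01
          · show EqvGen S (xi, (2:Fin 4)) (resolveEnd s' (xi, (2:Fin 4)))
            rw [show resolveEnd s' (xi, (2:Fin 4)) = (xi, 3) from by simp [resolveEnd, htrue]]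
            refine EqvGen.trans _ _ _ (hrs _ _ ?_)
              (EqvGen.trans _ _ _ (EqvGen.symm _ _ h01) (hrs _ _ ?_)) <;>
              simp [resolveEnd, hsi]
          · show EqvGen S (xi, (3:Fin 4)) (resolveEnd s' (xi, (3:Fin 4)))
            rw [show resolveEnd s' (xi, (3:Fin 4)) = (xi, 2) from by simp [resolveEnd, htrue]]
            refine EqvGen.symm _ _ ?_
            refine EqvGen.trans _ _ _ (hrs _ _ ?_)
              (EqvGen.trans _ _ _ (EqvGen.symm _ _ h01) (hrs _ _ ?_)) <;>
              simp [resolveEnd, hsi]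
      · rw [hs'ne x hx] at hres
        exact EqvGen.rel x y (Or.inl (Or.inr hres))
  have h2 : Nat.card (Quotient (EqvGen.setoid S)) ≤ circuits D s' :=
    card_quot_le_of_imp himp
  exact key.trans (Nat.add_le_add_right h2 1)

/-- Hamming distance between two states. -/
def hdist [Fintype V] [DecidableEq V] (s t : DState V) : ℕ :=
  (Finset.univ.filter fun i => s i ≠ t i).card

lemma hdist_eq_zero_iff [Fintype V] [DecidableEq V] {s t : DState V} :
    hdist s t = 0 ↔ s = t := by
  unfold hdist
  rw [Finset.card_eq_zero, Finset.filter_eq_empty_iff]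
  constructor
  · intro h; funext i; simpa using h (Finset.mem_univ i)
  · intro h i _; simp [h]

lemma circuits_le_hdist [Fintype V] [DecidableEq V] (D : Diagram V) (s t : DState V) :
    circuits D s ≤ circuits D t + hdist s t := by
  classical
  suffices H : ∀ n (s : DState V), hdist s t = n → circuits D s ≤ circuits D t + n by
    have := H (hdist s t) s rfl; omega
  intro n
  induction n with
  | zero => intro s hk; rw [hdist_eq_zero_iff.1 hk]; omega
  | succ n ih =>
    intro s hk
    have hne : s ≠ t := by intro h; rw [h, hdist_eq_zero_iff.2 rfl] at hk; omega
    obtain ⟨i, hi⟩ : ∃ i, s i ≠ t i := by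
      by_contra h; push_neg at h; exact hne (funext h)
    set s' := Function.update s i (t i) with hs'
    have hupd : hdist s' t = n := by
      have hers : (Finset.univ.filter fun j => s' j ≠ t j)
          = (Finset.univ.filter fun j => s j ≠ t j).erase i := by
        ext j
        by_cases hj : j = i <;>
          simp [hs', Finset.mem_erase, hj, Function.update_apply]
      have := hk
      unfold hdist at this ⊢
      rw [hers, Finset.card_erase_of_mem (by simpa using hi), this]; omega
    have h1 : circuits D s ≤ circuits D s' + 1 :=
      circuits_update_le D s i (t i) (Ne.symm hi)
    have h2 := ih s' hupd
    omega

lemma oneOff_of_hdist_one [Fintype V] [DecidableEq V] {s t : DState V}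
    (h : hdist s t = 1) : OneOff t s := by
  classical
  obtain ⟨i, hi⟩ := Finset.card_eq_one.1 h
  refine ⟨i, ?_, ?_⟩
  · have : i ∈ Finset.univ.filter fun j => s j ≠ t j := hi ▸ Finset.mem_singleton_self i
    simp only [Finset.mem_filter] at this
    exact Ne.symm this.2
  · intro j hj
    by_contra hc
    have : j ∈ Finset.univ.filter fun k => s k ≠ t k := by
      simp [Ne.symm hc]
    rw [hi, Finset.mem_singleton] at this
    exact hj this

lemma circuits_le_hdist_adeq [Fintype V] [DecidableEq V] (D : Diagram V) (s t : DState V)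
    (hadeq : ∀ u : DState V, OneOff t u → circuits D u < circuits D t) (hne : s ≠ t) :
    circuits D s + 2 ≤ circuits D t + hdist s t := by
  classical
  suffices H : ∀ n (s : DState V), s ≠ t → hdist s t = n →
      circuits D s + 2 ≤ circuits D t + n by
    have := H (hdist s t) s hne rfl; omega
  clear hne s
  intro n
  induction n with
  | zero => intro s hne hk; exact absurd (hdist_eq_zero_iff.1 hk) hne
  | succ n ih =>
    intro s hne hk
    rcases Nat.eq_zero_or_pos n with rfl | hn
    · have := hadeq s (oneOff_of_hdist_one hk)
      omega
    · obtain ⟨i, hi⟩ : ∃ i, s i ≠ t i := by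
        by_contra h; push_neg at h; exact hne (funext h)
      set s' := Function.update s i (t i) with hs'
      have hupd : hdist s' t = n := by
        have hers : (Finset.univ.filter fun j => s' j ≠ t j)
            = (Finset.univ.filter fun j => s j ≠ t j).erase i := by
          ext j
          by_cases hj : j = i <;>
            simp [hs', Finset.mem_erase, hj, Function.update_apply]
        have := hk
        unfold hdist at this ⊢
        rw [hers, Finset.card_erase_of_mem (by simpa using hi), this]; omega
      have hne' : s' ≠ t := by
        intro h; rw [h, hdist_eq_zero_iff.2 rfl] at hupd; omega
      have h1 : circuits D s ≤ circuits D s' + 1 :=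
        circuits_update_le D s i (t i) (Ne.symm hi)
      have h2 := ih s' hne' hupd
      omega

/-- View a Laurent polynomial as a finitely supported function (coefficients). -/
def fco (p : LaurentPolynomial ℤ) : ℤ →₀ ℤ := p.coeff

def fcoHom : LaurentPolynomial ℤ →+ (ℤ →₀ ℤ) where
  toFun := fco
  map_zero' := rfl
  map_add' := fun _ _ => rfl

@[simp] lemma fco_neg (p : LaurentPolynomial ℤ) (e : ℤ) : fco (-p) e = -(fco p e) :=
  Finsupp.neg_apply _ _

@[simp] lemma fco_sub (p q : LaurentPolynomial ℤ) (e : ℤ) :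
    fco (p - q) e = fco p e - fco q e := Finsupp.sub_apply _ _ _

lemma fco_mul_T (p : LaurentPolynomial ℤ) (a e : ℤ) : fco (p * T a) e = fco p (e - a) := by
  show (p * AddMonoidAlgebra.single a 1 : AddMonoidAlgebra ℤ ℤ).coeff e = _
  rw [AddMonoidAlgebra.coeff_mul_single_apply, mul_one]; rfl

lemma fco_T_mul (a : ℤ) (p : LaurentPolynomial ℤ) (e : ℤ) : fco (T a * p) e = fco p (e - a) := by
  rw [mul_comm, fco_mul_T]

lemma fco_T (a e : ℤ) : fco (T a) e = if e = a then 1 else 0 := by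
  show (Finsupp.single a 1 : ℤ →₀ ℤ) e = _
  rw [Finsupp.single_apply]
  by_cases h : e = a <;> simp [h]
  omega

/-- The loop value `δ = -A⁻² - A²`. -/
noncomputable def dd : LaurentPolynomial ℤ := -T (-2) - T 2

lemma fco_mul_dd (p : LaurentPolynomial ℤ) (e : ℤ) :
    fco (p * dd) e = -(fco p (e + 2)) - fco p (e - 2) := by
  have : p * dd = -(p * T (-2)) - p * T 2 := by unfold dd; ring
  rw [this, fco_sub, fco_neg, fco_mul_T, fco_mul_T]
  norm_num

lemma fco_dd_pow_eq_zero_of_gt (k : ℕ) (e : ℤ) (h : 2 * k < e) : fco (dd ^ k) e = 0 := by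
  induction k generalizing e with
  | zero =>
    simp only [pow_zero]
    rw [show (1 : LaurentPolynomial ℤ) = T 0 from rfl, fco_T]
    rw [if_neg (by omega)]
  | succ k ih =>
    rw [pow_succ, fco_mul_dd, ih (e + 2) (by push_cast at h ⊢; omega),
      ih (e - 2) (by push_cast at h ⊢; omega)]
    ring

lemma fco_dd_pow_eq_zero_of_lt (k : ℕ) (e : ℤ) (h : e < -(2 * k)) : fco (dd ^ k) e = 0 := by
  induction k generalizing e with
  | zero =>
    simp only [pow_zero]
    rw [show (1 : LaurentPolynomial ℤ) = T 0 from rfl, fco_T]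
    rw [if_neg (by omega)]
  | succ k ih =>
    rw [pow_succ, fco_mul_dd, ih (e + 2) (by push_cast at h ⊢; omega),
      ih (e - 2) (by push_cast at h ⊢; omega)]
    ring

lemma fco_dd_pow_top (k : ℕ) : fco (dd ^ k) (2 * k) = (-1) ^ k := by
  induction k with
  | zero =>
    simp only [pow_zero]
    rw [show (1 : LaurentPolynomial ℤ) = T 0 from rfl, fco_T]
    norm_num
  | succ k ih =>
    rw [pow_succ, fco_mul_dd,
      fco_dd_pow_eq_zero_of_gt k (2 * (k + 1 : ℕ) + 2) (by push_cast; omega),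
      show (2 * (k + 1 : ℕ) : ℤ) - 2 = 2 * k from by push_cast; ring, ih]
    ring

lemma fco_dd_pow_bot (k : ℕ) : fco (dd ^ k) (-(2 * k)) = (-1) ^ k := by
  induction k with
  | zero =>
    simp only [pow_zero]
    rw [show (1 : LaurentPolynomial ℤ) = T 0 from rfl, fco_T]
    norm_num
  | succ k ih =>
    rw [pow_succ, fco_mul_dd,
      fco_dd_pow_eq_zero_of_lt k (-(2 * (k + 1 : ℕ)) - 2) (by push_cast; omega),
      show (-(2 * (k + 1 : ℕ)) : ℤ) + 2 = -(2 * k) from by push_cast; ring, ih]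
    ring

lemma signSum_eq_plus [Fintype V] [DecidableEq V] (s : DState V) :
    signSum s = (Fintype.card V : ℤ) - 2 * hdist s (sPlus V) := by
  classical
  unfold signSum hdist
  have : ∀ c : V, (if s c then (1 : ℤ) else -1)
      = 1 - 2 * (if s c ≠ sPlus V c then 1 else 0) := by
    intro c; cases hc : s c <;> simp [sPlus, hc]
  rw [Finset.sum_congr rfl fun c _ => this c, Finset.sum_sub_distrib]
  rw [← Finset.mul_sum, Finset.sum_boole]
  simp [Finset.card_univ]

lemma signSum_eq_minus [Fintype V] [DecidableEq V] (s : DState V) :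
    signSum s = -(Fintype.card V : ℤ) + 2 * hdist s (sMinus V) := by
  classical
  unfold signSum hdist
  have : ∀ c : V, (if s c then (1 : ℤ) else -1)
      = -1 + 2 * (if s c ≠ sMinus V c then 1 else 0) := by
    intro c; cases hc : s c <;> simp [sMinus, hc]
  rw [Finset.sum_congr rfl fun c _ => this c, Finset.sum_add_distrib]
  rw [← Finset.mul_sum, Finset.sum_boole]
  simp [Finset.card_univ]


/-- Lickorish's lemma: for an `n`-crossing link diagram `D`,
`M_⟨D⟩ ≤ n + 2|s₊D| - 2` (with equality if `D` is plus-adequate) and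
`m_⟨D⟩ ≥ -n - 2|s₋D| + 2` (with equality if `D` is minus-adequate). -/
theorem kauffman_extremal_degrees {V : Type} [Fintype V] [DecidableEq V]
    (D : Diagram V) (hn : 1 ≤ Fintype.card V) :
    (maxDeg (kauffman D) ≤ (Fintype.card V : ℤ) + 2 * circuits D (sPlus V) - 2
      ∧ (PlusAdequate D →
          maxDeg (kauffman D) = (Fintype.card V : ℤ) + 2 * circuits D (sPlus V) - 2))
    ∧ (-(Fintype.card V : ℤ) - 2 * circuits D (sMinus V) + 2 ≤ minDeg (kauffman D)
      ∧ (MinusAdequate D →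
          minDeg (kauffman D) = -(Fintype.card V : ℤ) - 2 * circuits D (sMinus V) + 2)) := by
  classical
  obtain ⟨v0⟩ : Nonempty V := Fintype.card_pos_iff.1 hn
  have hc1 : ∀ s : DState V, 1 ≤ circuits D s := by
    intro s
    have : Nonempty (Quotient (Relation.EqvGen.setoid (circuitRel D s))) :=
      ⟨Quotient.mk'' (v0, 0)⟩
    exact Nat.card_pos
  set n : ℕ := Fintype.card V with hnn
  set cp : ℕ := circuits D (sPlus V) with hcp
  set cm : ℕ := circuits D (sMinus V) with hcm
  set M : ℤ := (n : ℤ) + 2 * cp - 2 with hM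
  set m : ℤ := -(n : ℤ) - 2 * cm + 2 with hm
  have hco : ∀ e : ℤ, fco (kauffman D) e
      = ∑ s : DState V, fco (dd ^ (circuits D s - 1)) (e - signSum s) := by
    intro e
    have h1 : fco (kauffman D)
        = ∑ s : DState V, fco (T (signSum s) * dd ^ (circuits D s - 1)) :=
      map_sum fcoHom (fun s => T (signSum s) * dd ^ (circuits D s - 1)) Finset.univ
    rw [h1, Finsupp.finset_sum_apply]
    exact Finset.sum_congr rfl fun s _ => fco_T_mul _ _ _
  have hcast : ∀ s : DState V, ((circuits D s - 1 : ℕ) : ℤ) = (circuits D s : ℤ) - 1 :=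
    fun s => by rw [Nat.cast_sub (hc1 s)]; norm_num
  -- vanishing above M
  have hub : ∀ e : ℤ, M < e → fco (kauffman D) e = 0 := by
    intro e he
    rw [hco e]
    refine Finset.sum_eq_zero fun s _ => ?_
    have hk := circuits_le_hdist D s (sPlus V)
    have hσ := signSum_eq_plus s
    apply fco_dd_pow_eq_zero_of_gt
    rw [hcast s]
    have hk' : (circuits D s : ℤ) ≤ (cp : ℤ) + (hdist s (sPlus V) : ℤ) := by
      exact_mod_cast hk
    rw [hσ]
    rw [hM] at he
    linarith
  -- vanishing below m
  have hlb : ∀ e : ℤ, e < m → fco (kauffman D) e = 0 := by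
    intro e he
    rw [hco e]
    refine Finset.sum_eq_zero fun s _ => ?_
    have hk := circuits_le_hdist D s (sMinus V)
    have hσ := signSum_eq_minus s
    apply fco_dd_pow_eq_zero_of_lt
    rw [hcast s]
    have hk' : (circuits D s : ℤ) ≤ (cm : ℤ) + (hdist s (sMinus V) : ℤ) := by
      exact_mod_cast hk
    rw [hσ]
    rw [hm] at he
    linarith
  have hsupp : (kauffman D).coeff.support = (fco (kauffman D)).support := rfl
  have hcp1 : 1 ≤ cp := hc1 _
  have hcm1 : 1 ≤ cm := hc1 _
  have hM0 : (0 : ℤ) ≤ M := by rw [hM]; push_cast; omega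
  have hm0 : m ≤ 0 := by rw [hm]; push_cast; omega
  have hmaxle : maxDeg (kauffman D) ≤ M := by
    unfold maxDeg
    have hall : ∀ x ∈ (kauffman D).coeff.support, x ≤ M := by
      intro x hx
      by_contra hxc
      push_neg at hxc
      rw [hsupp] at hx
      exact Finsupp.mem_support_iff.1 hx (hub x hxc)
    cases hmax : (kauffman D).coeff.support.max with
    | bot => simpa using hM0
    | coe a =>
      have ha : a ∈ (kauffman D).coeff.support := Finset.mem_of_max hmax
      simpa using hall a ha
  have hminle : m ≤ minDeg (kauffman D) := by
    unfold minDeg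
    have hall : ∀ x ∈ (kauffman D).coeff.support, m ≤ x := by
      intro x hx
      by_contra hxc
      push_neg at hxc
      rw [hsupp] at hx
      exact Finsupp.mem_support_iff.1 hx (hlb x hxc)
    cases hmin : (kauffman D).coeff.support.min with
    | top => simpa using hm0
    | coe a =>
      have ha : a ∈ (kauffman D).coeff.support := Finset.mem_of_min hmin
      simpa using hall a ha
  refine ⟨⟨hmaxle, fun hpa => ?_⟩, ⟨hminle, fun hma => ?_⟩⟩
  · -- equality for plus-adequate
    have hMco : fco (kauffman D) M = (-1 : ℤ) ^ (cp - 1) := by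
      rw [hco M]
      rw [Finset.sum_eq_single (sPlus V)]
      · have h0 : hdist (sPlus V) (sPlus V) = 0 := hdist_eq_zero_iff.2 rfl
        rw [signSum_eq_plus, h0]
        rw [show M - ((n : ℤ) - 2 * (0 : ℕ)) = 2 * ((cp - 1 : ℕ) : ℤ) by
          rw [hcast (sPlus V)]; rw [hM]; push_cast; ring]
        exact fco_dd_pow_top (cp - 1)
      · intro s _ hs
        have hk2 := circuits_le_hdist_adeq D s (sPlus V) hpa hs
        apply fco_dd_pow_eq_zero_of_gt
        rw [hcast s, signSum_eq_plus s]
        have hk' : (circuits D s : ℤ) + 2 ≤ (cp : ℤ) + (hdist s (sPlus V) : ℤ) := by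
          exact_mod_cast hk2
        rw [hM]
        linarith
      · intro h; exact absurd (Finset.mem_univ _) h
    have hMne : fco (kauffman D) M ≠ 0 := by
      rw [hMco]; exact pow_ne_zero _ (by norm_num)
    have hmem : M ∈ (kauffman D).coeff.support := by
      rw [hsupp]; exact Finsupp.mem_support_iff.2 hMne
    have hall : ∀ x ∈ (kauffman D).coeff.support, x ≤ M := by
      intro x hx
      by_contra hxc
      push_neg at hxc
      rw [hsupp] at hx
      exact Finsupp.mem_support_iff.1 hx (hub x hxc)
    have hmaxeq : (kauffman D).coeff.support.max = (M : WithBot ℤ) :=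
      le_antisymm (Finset.max_le fun a ha => by exact_mod_cast hall a ha) (Finset.le_max hmem)
    unfold maxDeg
    rw [hmaxeq]
    rfl
  · -- equality for minus-adequate
    have hmco : fco (kauffman D) m = (-1 : ℤ) ^ (cm - 1) := by
      rw [hco m]
      rw [Finset.sum_eq_single (sMinus V)]
      · have h0 : hdist (sMinus V) (sMinus V) = 0 := hdist_eq_zero_iff.2 rfl
        rw [signSum_eq_minus, h0]
        rw [show m - (-(n : ℤ) + 2 * (0 : ℕ)) = -(2 * ((cm - 1 : ℕ) : ℤ)) by
          rw [hcast (sMinus V)]; rw [hm]; push_cast; ring]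
        exact fco_dd_pow_bot (cm - 1)
      · intro s _ hs
        have hk2 := circuits_le_hdist_adeq D s (sMinus V) hma hs
        apply fco_dd_pow_eq_zero_of_lt
        rw [hcast s, signSum_eq_minus s]
        have hk' : (circuits D s : ℤ) + 2 ≤ (cm : ℤ) + (hdist s (sMinus V) : ℤ) := by
          exact_mod_cast hk2
        rw [hm]
        linarith
      · intro h; exact absurd (Finset.mem_univ _) h
    have hmne : fco (kauffman D) m ≠ 0 := by
      rw [hmco]; exact pow_ne_zero _ (by norm_num)
    have hmem : m ∈ (kauffman D).coeff.support := by
      rw [hsupp]; exact Finsupp.mem_support_iff.2 hmne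
    have hall : ∀ x ∈ (kauffman D).coeff.support, m ≤ x := by
      intro x hx
      by_contra hxc
      push_neg at hxc
      rw [hsupp] at hx
      exact Finsupp.mem_support_iff.1 hx (hlb x hxc)
    have hmineq : (kauffman D).coeff.support.min = (m : WithTop ℤ) :=
      le_antisymm (Finset.min_le hmem) (Finset.le_min fun a ha => by exact_mod_cast hall a ha)
    unfold minDeg
    rw [hmineq]
    rfl


end KnotPaper
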